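/- The creation operator acts on the (q,α)-deformed Hermite functions by raising the index: for every integer n ≥ 0 and every real x ≠ 0, (q^{2α+3/2}/(√(1−q)·x)) · [ √(1+q^{−2α−1}x²) · φ_n^α(qx;q) − q^{−(2α+1)θ(n)} · φ_n^α(x;q) ] = √(⟦n+1⟧_{q,α}) · φ_{n+1}^α(x;q), where θ(n)=1 if n is odd and θ(n)=0 if n is even. -/

import Mathlib

open scoped BigOperators
open Real Filter

noncomputable section

/-- q-shifted factorial `(a;q)_n`. -/
def qPoch (a q : ℝ) (n : ℕ) : ℝ := ∏ k ∈ Finset.range n, (1 - a * q ^ k)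

/-- infinite q-shifted factorial `(a;q)_∞`. -/
def qPochInf (a q : ℝ) : ℝ := ∏' k : ℕ, (1 - a * q ^ k)

/-- q-number `⟦x⟧_q = (1-q^x)/(1-q)`. -/
def qNumber (q x : ℝ) : ℝ := (1 - q ^ x) / (1 - q)

/-- generalized q-integer `⟦n⟧_{q,α}`: equals `⟦n⟧_q` for even `n` and
`⟦n+2α+1⟧_q` for odd `n` (so `⟦2m+1⟧_{q,α} = ⟦2m+2α+2⟧_q`). -/
def qNumAlpha (q α : ℝ) (n : ℕ) : ℝ :=
  if n % 2 = 0 then qNumber q n else qNumber q (n + 2 * α + 1)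

/-- generalized q-factorial `n!_{q,α}`. -/
def qFactAlpha (q α : ℝ) (n : ℕ) : ℝ := ∏ k ∈ Finset.range n, qNumAlpha q α (k + 1)

/-- generalized q-shifted factorial `(q;q)_{n,α} = (1-q)^n n!_{q,α}`. -/
def qPochAlpha (q α : ℝ) (n : ℕ) : ℝ := (1 - q) ^ n * qFactAlpha q α n

/-- generalized discrete q-Hermite II polynomials `h̃_{n,α}(x;q)`. -/
def hTilde (q α : ℝ) (n : ℕ) (x : ℝ) : ℝ :=
  qPoch q q n * ∑ k ∈ Finset.range (n / 2 + 1),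
    (-1 : ℝ) ^ k * q ^ ((k * (2 * k + 1) : ℤ) - (2 * n * k : ℤ)) * x ^ (n - 2 * k) /
      (qPoch (q ^ 2) (q ^ 2) k * qPochAlpha q α (n - 2 * k))

/-- the weight `ω_α(x;q) = e_{q²}(-q^{-2α-1}x²) = 1/∏_{k≥0}(1+q^{-2α-1}x²q^{2k})`. -/
def omegaAlpha (q α x : ℝ) : ℝ :=
  (∏' k : ℕ, (1 + q ^ (-(2 * α + 1)) * x ^ 2 * q ^ (2 * k)))⁻¹

/-- normalization constant `c_α`. -/
def cAlpha (q α : ℝ) : ℝ :=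
  Real.sqrt (qPochInf (-q ^ (-(2 * α + 1))) (q ^ 2) * qPochInf (-q ^ (2 * α + 3)) (q ^ 2) *
      qPochInf (q ^ (2 * α + 2)) (q ^ 2) /
    (2 * (1 - q) *
      (qPochInf (-q) (q ^ 2) * qPochInf (-q) (q ^ 2) * qPochInf (q ^ 2) (q ^ 2))))

/-- normalization constant `d_{n,α} = c_α q^{n²/2} (q;q)_{n,α}^{1/2} / (q;q)_n`. -/
def dAlpha (q α : ℝ) (n : ℕ) : ℝ :=
  cAlpha q α * q ^ (((n : ℝ) ^ 2) / 2) * Real.sqrt (qPochAlpha q α n) / qPoch q q n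

/-- the (q,α)-deformed Hermite functions `φ_n^α(x;q)`. -/
def phiQ (q α : ℝ) (n : ℕ) (x : ℝ) : ℝ :=
  dAlpha q α n * Real.sqrt (omegaAlpha q α x) * hTilde q α n x

/-- parity indicator `θ(n)`: 1 if `n` is odd, 0 if `n` is even. -/
def theta (n : ℕ) : ℝ := if n % 2 = 1 then 1 else 0

/-- the q-Gamma function `Γ_q(z) = (q;q)_∞ / (q^z;q)_∞ · (1-q)^{1-z}`. -/
def qGammaF (q z : ℝ) : ℝ := qPochInf q q / qPochInf (q ^ z) q * (1 - q) ^ (1 - z)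

/-- Rosenblum generalized factorial `γ_ν(n)`. -/
def gammaGen (ν : ℝ) (n : ℕ) : ℝ :=
  2 ^ n * (Nat.factorial (n / 2) : ℝ) *
    Real.Gamma (ν + (((n + 1) / 2 : ℕ) : ℝ) + 1 / 2) / Real.Gamma (ν + 1 / 2)

/-- generalized Hermite polynomials `H_n^ν(x)`. -/
def HGen (ν : ℝ) (n : ℕ) (x : ℝ) : ℝ :=
  (Nat.factorial n : ℝ) * ∑ k ∈ Finset.range (n / 2 + 1),
    (-1 : ℝ) ^ k * (2 * x) ^ (n - 2 * k) / ((Nat.factorial k : ℝ) * gammaGen ν (n - 2 * k))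

/-- Rosenblum generalized Hermite functions `φ_n^ν(x)`. -/
def phiGen (ν : ℝ) (n : ℕ) (x : ℝ) : ℝ :=
  Real.sqrt (gammaGen ν n / Real.Gamma (ν + 1 / 2)) * Real.exp (-x ^ 2 / 2) *
    HGen ν n x / ((2 : ℝ) ^ ((n : ℝ) / 2) * (Nat.factorial n : ℝ))

/-- symmetric q-number `[x]_s = (s^x - s^{-x})/(s - s^{-1})`. -/
def qNumSym (s x : ℝ) : ℝ := (s ^ x - s ^ (-x)) / (s - s⁻¹)

/-- Euler q-exponential `e_q(z) = Σ z^k/(q;q)_k`. -/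
def eExp (q z : ℝ) : ℝ := ∑' k : ℕ, z ^ k / qPoch q q k

/-- generalized q-exponential `E_{q,α}(z) = Σ q^{k(k-1)/2} z^k/(q;q)_{k,α}`. -/
def bigEAlpha (q α z : ℝ) : ℝ := ∑' k : ℕ, q ^ (k * (k - 1) / 2) * z ^ k / qPochAlpha q α k

/-- generalized q-exponential `e_{q,α}(z) = Σ z^k/(q;q)_{k,α}`. -/
def eExpAlpha (q α z : ℝ) : ℝ := ∑' k : ℕ, z ^ k / qPochAlpha q α k

namespace Stmt6

variable {q α : ℝ}

lemma qPoch_zero (a Q : ℝ) : qPoch a Q 0 = 1 := by simp [qPoch]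

lemma qPoch_q_succ (q : ℝ) (n : ℕ) : qPoch q q (n + 1) = qPoch q q n * (1 - q ^ (n + 1)) := by
  unfold qPoch; rw [Finset.prod_range_succ]; ring

lemma qPoch2_succ (q : ℝ) (n : ℕ) :
    qPoch (q ^ 2) (q ^ 2) (n + 1) = qPoch (q ^ 2) (q ^ 2) n * (1 - q ^ (2 * n + 2)) := by
  unfold qPoch; rw [Finset.prod_range_succ]; ring

lemma qPoch_q_pos (hq0 : 0 < q) (hq1 : q < 1) (n : ℕ) : 0 < qPoch q q n := by
  unfold qPoch
  apply Finset.prod_pos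
  intro k _
  have h : q ^ (k + 1) < 1 := pow_lt_one₀ (le_of_lt hq0) hq1 (Nat.succ_ne_zero k)
  have : q * q ^ k = q ^ (k + 1) := by ring
  rw [this]; linarith

lemma qPoch2_pos (hq0 : 0 < q) (hq1 : q < 1) (n : ℕ) : 0 < qPoch (q ^ 2) (q ^ 2) n := by
  unfold qPoch
  apply Finset.prod_pos
  intro k _
  have h : q ^ (2 * k + 2) < 1 := pow_lt_one₀ (le_of_lt hq0) hq1 (by omega)
  have : q ^ 2 * (q ^ 2) ^ k = q ^ (2 * k + 2) := by ring
  rw [this]; linarith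

lemma one_sub_mul_qNumAlpha_even (hq0 : 0 < q) (hq1 : q < 1) (s : ℕ) :
    (1 - q) * qNumAlpha q α (2 * s) = 1 - q ^ (2 * s) := by
  have h1 : (1 : ℝ) - q ≠ 0 := by linarith
  unfold qNumAlpha qNumber
  rw [if_pos (by omega)]
  rw [Real.rpow_natCast]
  field_simp

lemma one_sub_mul_qNumAlpha_odd (hq0 : 0 < q) (hq1 : q < 1) (s : ℕ) :
    (1 - q) * qNumAlpha q α (2 * s + 1) = 1 - q ^ (2 * s + 1) * q ^ (2 * α + 1) := by
  have h1 : (1 : ℝ) - q ≠ 0 := by linarith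
  unfold qNumAlpha qNumber
  rw [if_neg (by omega)]
  have h2 : q ^ ((((2 * s + 1 : ℕ)) : ℝ) + 2 * α + 1) = q ^ (2 * s + 1) * q ^ (2 * α + 1) := by
    rw [show (((2 * s + 1 : ℕ)) : ℝ) + 2 * α + 1 = (((2 * s + 1 : ℕ)) : ℝ) + (2 * α + 1) by ring,
      Real.rpow_add hq0, Real.rpow_natCast]
  rw [h2]
  field_simp

lemma qPochAlpha_zero : qPochAlpha q α 0 = 1 := by simp [qPochAlpha, qFactAlpha]

lemma qPochAlpha_succ (n : ℕ) :
    qPochAlpha q α (n + 1) = qPochAlpha q α n * ((1 - q) * qNumAlpha q α (n + 1)) := by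
  unfold qPochAlpha qFactAlpha
  rw [Finset.prod_range_succ, pow_succ]; ring

lemma PA_even_succ (hq0 : 0 < q) (hq1 : q < 1) (s : ℕ) :
    qPochAlpha q α (2 * s + 1)
      = qPochAlpha q α (2 * s) * (1 - q ^ (2 * s + 1) * q ^ (2 * α + 1)) := by
  rw [qPochAlpha_succ, one_sub_mul_qNumAlpha_odd hq0 hq1]

lemma PA_odd_succ (hq0 : 0 < q) (hq1 : q < 1) (s : ℕ) :
    qPochAlpha q α (2 * s + 2) = qPochAlpha q α (2 * s + 1) * (1 - q ^ (2 * s + 2)) := by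
  have := qPochAlpha_succ (q := q) (α := α) (2 * s + 1)
  rw [this, show 2 * s + 1 + 1 = 2 * (s + 1) by ring,
    one_sub_mul_qNumAlpha_even hq0 hq1 (s + 1)]

lemma one_sub_qu_pos (hq0 : 0 < q) (hq1 : q < 1) (hα : -1 < α) (s : ℕ) :
    0 < 1 - q ^ (s + 1) * q ^ (2 * α + 1) := by
  have h : q ^ (s + 1) * q ^ (2 * α + 1) = q ^ ((((s + 1 : ℕ)) : ℝ) + (2 * α + 1)) := by
    rw [Real.rpow_add hq0 (((s + 1 : ℕ)) : ℝ) (2 * α + 1), Real.rpow_natCast]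
  rw [h]
  have hlt : q ^ ((((s + 1 : ℕ)) : ℝ) + (2 * α + 1)) < 1 := by
    apply Real.rpow_lt_one (le_of_lt hq0) hq1
    have : (0 : ℝ) ≤ ((s : ℝ)) := Nat.cast_nonneg s
    push_cast
    linarith
  linarith

lemma qNumAlpha_succ_pos (hq0 : 0 < q) (hq1 : q < 1) (hα : -1 < α) (n : ℕ) :
    0 < qNumAlpha q α (n + 1) := by
  have h1q : (0 : ℝ) < 1 - q := by linarith
  have key : 0 < (1 - q) * qNumAlpha q α (n + 1) := by
    rcases Nat.even_or_odd n with ⟨s, hs⟩ | ⟨s, hs⟩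
    · have hn : n + 1 = 2 * s + 1 := by omega
      rw [hn, one_sub_mul_qNumAlpha_odd hq0 hq1]
      exact one_sub_qu_pos hq0 hq1 hα (2 * s)
    · have hn : n + 1 = 2 * (s + 1) := by omega
      rw [hn, one_sub_mul_qNumAlpha_even hq0 hq1]
      have : q ^ (2 * (s + 1)) < 1 := pow_lt_one₀ (le_of_lt hq0) hq1 (by omega)
      linarith
  nlinarith [key, h1q]

lemma qPochAlpha_pos (hq0 : 0 < q) (hq1 : q < 1) (hα : -1 < α) (n : ℕ) :
    0 < qPochAlpha q α n := by
  induction n with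
  | zero => rw [qPochAlpha_zero]; norm_num
  | succ k ih =>
      rw [qPochAlpha_succ]
      exact mul_pos ih (mul_pos (by linarith) (qNumAlpha_succ_pos hq0 hq1 hα k))

end Stmt6
namespace Stmt6

lemma sum_shift_even {M : ℕ} (T S R : ℕ → ℝ) (h0 : T 0 = R 0) (hlast : S M = 0)
    (hmid : ∀ i, i < M → T (i + 1) + S i = R (i + 1)) :
    (∑ k ∈ Finset.range (M + 1), T k) + (∑ k ∈ Finset.range (M + 1), S k)
      = ∑ k ∈ Finset.range (M + 1), R k := by
  rw [Finset.sum_range_succ' T, Finset.sum_range_succ S, Finset.sum_range_succ' R, hlast, h0]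
  have : (∑ i ∈ Finset.range M, T (i + 1)) + (∑ i ∈ Finset.range M, S i)
      = ∑ i ∈ Finset.range M, R (i + 1) := by
    rw [← Finset.sum_add_distrib]
    exact Finset.sum_congr rfl fun i hi => hmid i (Finset.mem_range.mp hi)
  linarith

lemma sum_shift_odd {M : ℕ} (T S R : ℕ → ℝ) (h0 : T 0 = R 0) (hlast : S M = R (M + 1))
    (hmid : ∀ i, i < M → T (i + 1) + S i = R (i + 1)) :
    (∑ k ∈ Finset.range (M + 1), T k) + (∑ k ∈ Finset.range (M + 1), S k)
      = ∑ k ∈ Finset.range (M + 2), R k := by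
  rw [Finset.sum_range_succ R (M + 1), Finset.sum_range_succ' T, Finset.sum_range_succ S,
    Finset.sum_range_succ' R, hlast, h0]
  have : (∑ i ∈ Finset.range M, T (i + 1)) + (∑ i ∈ Finset.range M, S i)
      = ∑ i ∈ Finset.range M, R (i + 1) := by
    rw [← Finset.sum_add_distrib]
    exact Finset.sum_congr rfl fun i hi => hmid i (Finset.mem_range.mp hi)
  linarith

end Stmt6
namespace Stmt6

variable {q α : ℝ}

/-- the summand of `hTilde`. -/
def F (q α : ℝ) (n k : ℕ) (x : ℝ) : ℝ :=
  (-1 : ℝ) ^ k * q ^ ((k * (2 * k + 1) : ℤ) - (2 * n * k : ℤ)) * x ^ (n - 2 * k) /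
    (qPoch (q ^ 2) (q ^ 2) k * qPochAlpha q α (n - 2 * k))

lemma hTilde_eq (q α : ℝ) (n : ℕ) (x : ℝ) :
    hTilde q α n x = qPoch q q n * ∑ k ∈ Finset.range (n / 2 + 1), F q α n k x := rfl

lemma F_div (hq0' : q ≠ 0) (n k : ℕ) (x : ℝ) :
    F q α n k x = (-1 : ℝ) ^ k * (q ^ (k * (2 * k + 1)) / q ^ (2 * n * k)) * x ^ (n - 2 * k) /
      (qPoch (q ^ 2) (q ^ 2) k * qPochAlpha q α (n - 2 * k)) := by
  unfold F
  rw [show ((k * (2 * k + 1) : ℤ) - (2 * n * k : ℤ))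
      = ((k * (2 * k + 1) : ℕ) : ℤ) - ((2 * n * k : ℕ) : ℤ) by push_cast; ring]
  rw [zpow_sub₀ hq0', zpow_natCast, zpow_natCast]

lemma key_even (hq0 : 0 < q) (hq1 : q < 1) (hα : -1 < α) (m : ℕ) (x : ℝ) :
    q ^ (2 * α + 1) * ((1 + q ^ (-(2 * α + 1)) * x ^ 2) * hTilde q α (2 * m) (q * x)
        - hTilde q α (2 * m) x) * (1 - q ^ (2 * m + 1))
      = q ^ (2 * m) * (1 - q ^ (2 * m + 1) * q ^ (2 * α + 1)) * x
          * hTilde q α (2 * m + 1) x := by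
  have hq0' : q ≠ 0 := ne_of_gt hq0
  have hu : q ^ (2 * α + 1) * q ^ (-(2 * α + 1)) = 1 := by
    rw [← Real.rpow_add hq0, show (2 * α + 1) + -(2 * α + 1) = 0 by ring, Real.rpow_zero]
  have hPA : ∀ s : ℕ, qPochAlpha q α s ≠ 0 := fun s => ne_of_gt (qPochAlpha_pos hq0 hq1 hα s)
  have hP2 : ∀ s : ℕ, qPoch (q ^ 2) (q ^ 2) s ≠ 0 := fun s => ne_of_gt (qPoch2_pos hq0 hq1 s)
  have hpow1 : ∀ s : ℕ, (1 : ℝ) - q ^ (s + 1) ≠ 0 := by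
    intro s
    have : q ^ (s + 1) < 1 := pow_lt_one₀ (le_of_lt hq0) hq1 (Nat.succ_ne_zero s)
    linarith
  have hqu : ∀ s : ℕ, (1 : ℝ) - q ^ (s + 1) * q ^ (2 * α + 1) ≠ 0 :=
    fun s => ne_of_gt (one_sub_qu_pos hq0 hq1 hα s)
  rw [hTilde_eq, hTilde_eq, hTilde_eq,
    show 2 * m / 2 + 1 = m + 1 by omega, show (2 * m + 1) / 2 + 1 = m + 1 by omega,
    qPoch_q_succ q (2 * m)]
  have h0 : x ^ 2 * F q α (2 * m) 0 (q * x)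
      = q ^ (2 * m) * (1 - q ^ (2 * m + 1) * q ^ (2 * α + 1)) * x * F q α (2 * m + 1) 0 x := by
    rw [F_div hq0', F_div hq0',
      show 2 * m - 2 * 0 = 2 * m by omega, show 2 * m + 1 - 2 * 0 = 2 * m + 1 by omega,
      PA_even_succ hq0 hq1 m, qPoch_zero]
    have n1 : qPochAlpha q α (2 * m) ≠ 0 := hPA _
    have n2 : (1 : ℝ) - q ^ (2 * m + 1) * q ^ (2 * α + 1) ≠ 0 := hqu (2 * m)
    field_simp
    ring
  have hlast : q ^ (2 * α + 1) * (F q α (2 * m) m (q * x) - F q α (2 * m) m x) = 0 := by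
    unfold F
    rw [Nat.sub_self]
    simp
  have hmid : ∀ i, i < m →
      x ^ 2 * F q α (2 * m) (i + 1) (q * x)
        + q ^ (2 * α + 1) * (F q α (2 * m) i (q * x) - F q α (2 * m) i x)
      = q ^ (2 * m) * (1 - q ^ (2 * m + 1) * q ^ (2 * α + 1)) * x
          * F q α (2 * m + 1) (i + 1) x := by
    intro i hi
    obtain ⟨t, rfl⟩ : ∃ t, m = i + t + 1 := ⟨m - i - 1, by omega⟩
    rw [F_div hq0', F_div hq0', F_div hq0', F_div hq0',
      show 2 * (i + t + 1) - 2 * (i + 1) = 2 * t by omega,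
      show 2 * (i + t + 1) - 2 * i = 2 * t + 2 by omega,
      show 2 * (i + t + 1) + 1 - 2 * (i + 1) = 2 * t + 1 by omega,
      show (2 * t + 2 : ℕ) = 2 * t + 2 by rfl]
    rw [PA_odd_succ hq0 hq1 t, PA_even_succ hq0 hq1 t, qPoch2_succ q i]
    have e1 : (1 : ℝ) - q ^ (2 * t + 1) * q ^ (2 * α + 1) ≠ 0 := hqu (2 * t)
    have e2 : (1 : ℝ) - q ^ (2 * t + 2) ≠ 0 := hpow1 (2 * t + 1)
    have e3 : (1 : ℝ) - q ^ (2 * i + 2) ≠ 0 := hpow1 (2 * i + 1)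
    have n1 : qPoch (q ^ 2) (q ^ 2) i ≠ 0 := hP2 i
    have n2 : qPochAlpha q α (2 * t) ≠ 0 := hPA _
    have e1' : (1 : ℝ) - q ^ (2 * α + 1) * q ^ (2 * t + 1) ≠ 0 := by rwa [mul_comm]
    field_simp
    ring
  have hsum := sum_shift_even
    (fun k => x ^ 2 * F q α (2 * m) k (q * x))
    (fun k => q ^ (2 * α + 1) * (F q α (2 * m) k (q * x) - F q α (2 * m) k x))
    (fun k => q ^ (2 * m) * (1 - q ^ (2 * m + 1) * q ^ (2 * α + 1)) * x
        * F q α (2 * m + 1) k x)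
    h0 hlast hmid
  have m1 : ∑ k ∈ Finset.range (m + 1), x ^ 2 * F q α (2 * m) k (q * x)
      = x ^ 2 * ∑ k ∈ Finset.range (m + 1), F q α (2 * m) k (q * x) := by
    rw [Finset.mul_sum]
  have m2 : ∑ k ∈ Finset.range (m + 1),
        q ^ (2 * α + 1) * (F q α (2 * m) k (q * x) - F q α (2 * m) k x)
      = q ^ (2 * α + 1) * ((∑ k ∈ Finset.range (m + 1), F q α (2 * m) k (q * x))
          - ∑ k ∈ Finset.range (m + 1), F q α (2 * m) k x) := by
    rw [← Finset.sum_sub_distrib, Finset.mul_sum]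
  have m3 : ∑ k ∈ Finset.range (m + 1),
        q ^ (2 * m) * (1 - q ^ (2 * m + 1) * q ^ (2 * α + 1)) * x * F q α (2 * m + 1) k x
      = q ^ (2 * m) * (1 - q ^ (2 * m + 1) * q ^ (2 * α + 1)) * x
          * ∑ k ∈ Finset.range (m + 1), F q α (2 * m + 1) k x := by
    rw [Finset.mul_sum]
  have SI : q ^ (2 * α + 1) * ((1 + q ^ (-(2 * α + 1)) * x ^ 2)
        * (∑ k ∈ Finset.range (m + 1), F q α (2 * m) k (q * x))
        - ∑ k ∈ Finset.range (m + 1), F q α (2 * m) k x)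
      = q ^ (2 * m) * (1 - q ^ (2 * m + 1) * q ^ (2 * α + 1)) * x
          * ∑ k ∈ Finset.range (m + 1), F q α (2 * m + 1) k x := by
    linear_combination hsum - m1 - m2 + m3
      + (x ^ 2 * ∑ k ∈ Finset.range (m + 1), F q α (2 * m) k (q * x)) * hu
  linear_combination (qPoch q q (2 * m) * (1 - q ^ (2 * m + 1))) * SI

end Stmt6
namespace Stmt6

variable {q α : ℝ}

lemma one_sub_qu_pos' (hq0 : 0 < q) (hq1 : q < 1) (hα : -1 < α) {s : ℕ} (hs : s ≠ 0) :
    0 < 1 - q ^ s * q ^ (2 * α + 1) := by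
  obtain ⟨r, rfl⟩ := Nat.exists_eq_succ_of_ne_zero hs
  exact one_sub_qu_pos hq0 hq1 hα r

lemma one_sub_pow_pos (hq0 : 0 < q) (hq1 : q < 1) {s : ℕ} (hs : s ≠ 0) :
    0 < 1 - q ^ s := by
  have := pow_lt_one₀ (le_of_lt hq0) hq1 hs; linarith

lemma key_odd (hq0 : 0 < q) (hq1 : q < 1) (hα : -1 < α) (m : ℕ) (x : ℝ) :
    q ^ (2 * α + 1) * (1 + q ^ (-(2 * α + 1)) * x ^ 2) * hTilde q α (2 * m + 1) (q * x)
        - hTilde q α (2 * m + 1) x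
      = q ^ (2 * m + 1) * x * hTilde q α (2 * m + 2) x := by
  have hq0' : q ≠ 0 := ne_of_gt hq0
  have hu : q ^ (2 * α + 1) * q ^ (-(2 * α + 1)) = 1 := by
    rw [← Real.rpow_add hq0, show (2 * α + 1) + -(2 * α + 1) = 0 by ring, Real.rpow_zero]
  have hPA : ∀ s : ℕ, qPochAlpha q α s ≠ 0 := fun s => ne_of_gt (qPochAlpha_pos hq0 hq1 hα s)
  have hP2 : ∀ s : ℕ, qPoch (q ^ 2) (q ^ 2) s ≠ 0 := fun s => ne_of_gt (qPoch2_pos hq0 hq1 s)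
  rw [hTilde_eq, hTilde_eq, hTilde_eq,
    show (2 * m + 1) / 2 + 1 = m + 1 by omega, show (2 * m + 2) / 2 + 1 = m + 2 by omega,
    qPoch_q_succ q (2 * m + 1)]
  have h0 : x ^ 2 * F q α (2 * m + 1) 0 (q * x)
      = q ^ (2 * m + 1) * (1 - q ^ (2 * m + 2)) * x * F q α (2 * m + 2) 0 x := by
    rw [F_div hq0', F_div hq0',
      show 2 * m + 1 - 2 * 0 = 2 * m + 1 by omega, show 2 * m + 2 - 2 * 0 = 2 * m + 2 by omega,
      PA_odd_succ hq0 hq1 m, qPoch_zero]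
    have n1 : qPochAlpha q α (2 * m + 1) ≠ 0 := hPA _
    have n2 : (1 : ℝ) - q ^ (2 * m + 2) ≠ 0 := ne_of_gt (one_sub_pow_pos hq0 hq1 (by omega))
    field_simp
    ring
  have hlast : q ^ (2 * α + 1) * F q α (2 * m + 1) m (q * x) - F q α (2 * m + 1) m x
      = q ^ (2 * m + 1) * (1 - q ^ (2 * m + 2)) * x * F q α (2 * m + 2) (m + 1) x := by
    rw [F_div hq0', F_div hq0', F_div hq0',
      show 2 * m + 1 - 2 * m = 1 by omega, show 2 * m + 2 - 2 * (m + 1) = 0 by omega,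
      qPoch2_succ q m, qPochAlpha_zero]
    have hPA1 : qPochAlpha q α 1 = 1 - q ^ 1 * q ^ (2 * α + 1) := by
      simpa [qPochAlpha_zero] using PA_even_succ (α := α) hq0 hq1 0
    rw [hPA1]
    have n1 : qPoch (q ^ 2) (q ^ 2) m ≠ 0 := hP2 m
    set w := (1 : ℝ) - q ^ 1 * q ^ (2 * α + 1) with hw
    have n2 : w ≠ 0 := ne_of_gt (one_sub_qu_pos' hq0 hq1 hα (by omega))
    have n3 : (1 : ℝ) - q ^ (2 * m + 2) ≠ 0 := ne_of_gt (one_sub_pow_pos hq0 hq1 (by omega))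
    have hq1u : q ^ 1 * q ^ (2 * α + 1) = 1 - w := by rw [hw]; ring
    field_simp
    ring
  have hmid : ∀ i, i < m →
      x ^ 2 * F q α (2 * m + 1) (i + 1) (q * x)
        + (q ^ (2 * α + 1) * F q α (2 * m + 1) i (q * x) - F q α (2 * m + 1) i x)
      = q ^ (2 * m + 1) * (1 - q ^ (2 * m + 2)) * x * F q α (2 * m + 2) (i + 1) x := by
    intro i hi
    obtain ⟨t, rfl⟩ : ∃ t, m = i + t + 1 := ⟨m - i - 1, by omega⟩
    rw [F_div hq0', F_div hq0', F_div hq0', F_div hq0',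
      show 2 * (i + t + 1) + 1 - 2 * (i + 1) = 2 * t + 1 by omega,
      show 2 * (i + t + 1) + 1 - 2 * i = 2 * (t + 1) + 1 by omega,
      show 2 * (i + t + 1) + 2 - 2 * (i + 1) = 2 * t + 2 by omega]
    rw [PA_even_succ hq0 hq1 (t + 1), show 2 * (t + 1) = 2 * t + 2 by ring,
      PA_odd_succ hq0 hq1 t, qPoch2_succ q i]
    have e1 : (1 : ℝ) - q ^ (2 * t + 2 + 1) * q ^ (2 * α + 1) ≠ 0 :=
      ne_of_gt (one_sub_qu_pos' hq0 hq1 hα (by omega))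
    have e2 : (1 : ℝ) - q ^ (2 * t + 2) ≠ 0 := ne_of_gt (one_sub_pow_pos hq0 hq1 (by omega))
    have e3 : (1 : ℝ) - q ^ (2 * i + 2) ≠ 0 := ne_of_gt (one_sub_pow_pos hq0 hq1 (by omega))
    have n1 : qPoch (q ^ 2) (q ^ 2) i ≠ 0 := hP2 i
    have n2 : qPochAlpha q α (2 * t + 1) ≠ 0 := hPA _
    have e1' : (1 : ℝ) - q ^ (2 * α + 1) * q ^ (2 * t + 2 + 1) ≠ 0 := by rwa [mul_comm]
    field_simp
    ring
  have hsum := sum_shift_odd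
    (fun k => x ^ 2 * F q α (2 * m + 1) k (q * x))
    (fun k => q ^ (2 * α + 1) * F q α (2 * m + 1) k (q * x) - F q α (2 * m + 1) k x)
    (fun k => q ^ (2 * m + 1) * (1 - q ^ (2 * m + 2)) * x * F q α (2 * m + 2) k x)
    h0 hlast hmid
  have m1 : ∑ k ∈ Finset.range (m + 1), x ^ 2 * F q α (2 * m + 1) k (q * x)
      = x ^ 2 * ∑ k ∈ Finset.range (m + 1), F q α (2 * m + 1) k (q * x) := by
    rw [Finset.mul_sum]
  have m2 : ∑ k ∈ Finset.range (m + 1),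
        (q ^ (2 * α + 1) * F q α (2 * m + 1) k (q * x) - F q α (2 * m + 1) k x)
      = q ^ (2 * α + 1) * (∑ k ∈ Finset.range (m + 1), F q α (2 * m + 1) k (q * x))
          - ∑ k ∈ Finset.range (m + 1), F q α (2 * m + 1) k x := by
    rw [Finset.sum_sub_distrib, Finset.mul_sum]
  have m3 : ∑ k ∈ Finset.range (m + 2),
        q ^ (2 * m + 1) * (1 - q ^ (2 * m + 2)) * x * F q α (2 * m + 2) k x
      = q ^ (2 * m + 1) * (1 - q ^ (2 * m + 2)) * x
          * ∑ k ∈ Finset.range (m + 2), F q α (2 * m + 2) k x := by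
    rw [Finset.mul_sum]
  have SI : q ^ (2 * α + 1) * (1 + q ^ (-(2 * α + 1)) * x ^ 2)
        * (∑ k ∈ Finset.range (m + 1), F q α (2 * m + 1) k (q * x))
        - ∑ k ∈ Finset.range (m + 1), F q α (2 * m + 1) k x
      = q ^ (2 * m + 1) * (1 - q ^ (2 * m + 2)) * x
          * ∑ k ∈ Finset.range (m + 2), F q α (2 * m + 2) k x := by
    linear_combination hsum - m1 - m2 + m3
      + (x ^ 2 * ∑ k ∈ Finset.range (m + 1), F q α (2 * m + 1) k (q * x)) * hu
  linear_combination (qPoch q q (2 * m + 1)) * SI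

end Stmt6
namespace Stmt6

variable {q α : ℝ}

lemma summable_geom_term (hq0 : 0 < q) (hq1 : q < 1) (x : ℝ) :
    Summable fun k : ℕ => q ^ (-(2 * α + 1)) * x ^ 2 * q ^ (2 * k) := by
  have h : ∀ k : ℕ, q ^ (-(2 * α + 1)) * x ^ 2 * q ^ (2 * k)
      = q ^ (-(2 * α + 1)) * x ^ 2 * (q ^ 2) ^ k := by
    intro k; rw [pow_mul]
  apply Summable.congr _ fun k => (h k).symm
  exact (summable_geometric_of_lt_one (by positivity) (by nlinarith)).mul_left _

lemma term_pos (x : ℝ) (hq0 : 0 < q) (k : ℕ) :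
    0 < 1 + q ^ (-(2 * α + 1)) * x ^ 2 * q ^ (2 * k) := by
  have : 0 ≤ q ^ (-(2 * α + 1)) * x ^ 2 * q ^ (2 * k) := by positivity
  linarith

lemma multipliable_omega (hq0 : 0 < q) (hq1 : q < 1) (x : ℝ) :
    Multipliable fun k : ℕ => 1 + q ^ (-(2 * α + 1)) * x ^ 2 * q ^ (2 * k) := by
  have hlog : Summable fun k : ℕ =>
      Real.log (1 + q ^ (-(2 * α + 1)) * x ^ 2 * q ^ (2 * k)) := by
    refine Summable.of_nonneg_of_le (fun k => ?_) (fun k => ?_)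
      (summable_geom_term (α := α) hq0 hq1 x)
    · apply Real.log_nonneg
      have : 0 ≤ q ^ (-(2 * α + 1)) * x ^ 2 * q ^ (2 * k) := by positivity
      linarith
    · have := Real.log_le_sub_one_of_pos (term_pos (α := α) x hq0 k)
      linarith
  exact Real.multipliable_of_summable_log (fun k => term_pos x hq0 k) hlog

lemma one_le_tprod_omega (hq0 : 0 < q) (hq1 : q < 1) (x : ℝ) :
    (1 : ℝ) ≤ ∏' k : ℕ, (1 + q ^ (-(2 * α + 1)) * x ^ 2 * q ^ (2 * k)) := by
  refine ge_of_tendsto' (multipliable_omega hq0 hq1 x).hasProd (fun s => ?_)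
  calc (1 : ℝ) = ∏ _i ∈ s, 1 := by simp
  _ ≤ ∏ i ∈ s, (1 + q ^ (-(2 * α + 1)) * x ^ 2 * q ^ (2 * i)) := by
      apply Finset.prod_le_prod
      · intro i _; norm_num
      · intro i _
        have : 0 ≤ q ^ (-(2 * α + 1)) * x ^ 2 * q ^ (2 * i) := by positivity
        linarith

lemma omega_pos (hq0 : 0 < q) (hq1 : q < 1) (x : ℝ) : 0 < omegaAlpha q α x := by
  unfold omegaAlpha
  have := one_le_tprod_omega (α := α) hq0 hq1 x
  apply inv_pos.mpr
  linarith

lemma omega_shift (hq0 : 0 < q) (hq1 : q < 1) (x : ℝ) :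
    omegaAlpha q α (q * x) = (1 + q ^ (-(2 * α + 1)) * x ^ 2) * omegaAlpha q α x := by
  have h1B : (0 : ℝ) < 1 + q ^ (-(2 * α + 1)) * x ^ 2 := by positivity
  unfold omegaAlpha
  have hshift : (fun k : ℕ => 1 + q ^ (-(2 * α + 1)) * (q * x) ^ 2 * q ^ (2 * k))
      = fun b : ℕ => 1 + q ^ (-(2 * α + 1)) * x ^ 2 * q ^ (2 * (b + 1)) := by
    funext k; ring
  have hmul2 : Multipliable (fun b : ℕ => 1 + q ^ (-(2 * α + 1)) * x ^ 2 * q ^ (2 * (b + 1))) := by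
    rw [← hshift]; exact multipliable_omega hq0 hq1 (q * x)
  have hstep := tprod_eq_zero_mul'
    (f := fun k : ℕ => 1 + q ^ (-(2 * α + 1)) * x ^ 2 * q ^ (2 * k)) hmul2
  rw [hshift]
  beta_reduce at hstep
  rw [hstep, show (1 : ℝ) + q ^ (-(2 * α + 1)) * x ^ 2 * q ^ (2 * 0)
      = 1 + q ^ (-(2 * α + 1)) * x ^ 2 by norm_num]
  rw [mul_inv, ← mul_assoc, mul_inv_cancel₀ (ne_of_gt h1B), one_mul]

end Stmt6

namespace Stmt6

lemma hkey_unified {q α : ℝ} (hq0 : 0 < q) (hq1 : q < 1) (hα : -1 < α) (n : ℕ) (x : ℝ) :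
    q ^ (2 * α + 1) * ((1 + q ^ (-(2 * α + 1)) * x ^ 2) * hTilde q α n (q * x)
        - q ^ (-((2 * α + 1) * theta n)) * hTilde q α n x) * (1 - q ^ (n + 1))
      = q ^ n * ((1 - q) * qNumAlpha q α (n + 1)) * x * hTilde q α (n + 1) x := by
  have hu : q ^ (2 * α + 1) * q ^ (-(2 * α + 1)) = 1 := by
    rw [← Real.rpow_add hq0, show (2 * α + 1) + -(2 * α + 1) = 0 by ring, Real.rpow_zero]
  rcases Nat.mod_two_eq_zero_or_one n with hpar | hpar
  · obtain ⟨m, rfl⟩ : ∃ m, n = 2 * m := ⟨n / 2, by omega⟩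
    have hth : theta (2 * m) = 0 := by unfold theta; rw [if_neg (by omega)]
    rw [hth, show -((2 * α + 1) * (0 : ℝ)) = 0 by ring, Real.rpow_zero, one_mul]
    rw [show 2 * m + 1 = 2 * m + 1 from rfl, one_sub_mul_qNumAlpha_odd hq0 hq1 m]
    linear_combination key_even hq0 hq1 hα m x
  · obtain ⟨m, rfl⟩ : ∃ m, n = 2 * m + 1 := ⟨n / 2, by omega⟩
    have hth : theta (2 * m + 1) = 1 := by unfold theta; rw [if_pos (by omega)]
    rw [hth, show -((2 * α + 1) * (1 : ℝ)) = -(2 * α + 1) by ring]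
    rw [show 2 * m + 1 + 1 = 2 * (m + 1) by ring, one_sub_mul_qNumAlpha_even hq0 hq1 (m + 1)]
    rw [show 2 * (m + 1) = 2 * m + 2 by ring]
    linear_combination (1 - q ^ (2 * m + 2)) * key_odd hq0 hq1 hα m x
      - (hTilde q α (2 * m + 1) x * (1 - q ^ (2 * m + 2))) * hu

end Stmt6

open Stmt6

/-- the creation operator raises the index of the deformed Hermite functions. -/
theorem stmt_6 (q α : ℝ) (hq0 : 0 < q) (hq1 : q < 1) (hα : -1 < α) (n : ℕ)
    (x : ℝ) (hx : x ≠ 0) :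
    q ^ (2 * α + 3 / 2) / (Real.sqrt (1 - q) * x) *
      (Real.sqrt (1 + q ^ (-(2 * α + 1)) * x ^ 2) * phiQ q α n (q * x) -
        q ^ (-((2 * α + 1) * theta n)) * phiQ q α n x) =
    Real.sqrt (qNumAlpha q α (n + 1)) * phiQ q α (n + 1) x := by
  have hq0' : q ≠ 0 := ne_of_gt hq0
  have h1q : (0 : ℝ) < 1 - q := by linarith
  have hupos : 0 < q ^ (2 * α + 1) := Real.rpow_pos_of_pos hq0 _
  have hNpos : 0 < qNumAlpha q α (n + 1) := qNumAlpha_succ_pos hq0 hq1 hα n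
  have hPApos : 0 < qPochAlpha q α n := qPochAlpha_pos hq0 hq1 hα n
  have hPqpos : 0 < qPoch q q n := qPoch_q_pos hq0 hq1 n
  have h1qn : 0 < 1 - q ^ (n + 1) := one_sub_pow_pos hq0 hq1 (Nat.succ_ne_zero n)
  have h1B : (0 : ℝ) < 1 + q ^ (-(2 * α + 1)) * x ^ 2 := by positivity
  have hωrel := omega_shift (α := α) hq0 hq1 x
  have hωpos := omega_pos (α := α) hq0 hq1 x
  have hsq : Real.sqrt (1 + q ^ (-(2 * α + 1)) * x ^ 2)
        * Real.sqrt (omegaAlpha q α (q * x))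
      = (1 + q ^ (-(2 * α + 1)) * x ^ 2) * Real.sqrt (omegaAlpha q α x) := by
    rw [hωrel, Real.sqrt_mul (le_of_lt h1B), ← mul_assoc,
      Real.mul_self_sqrt (le_of_lt h1B)]
  have hkey := hkey_unified hq0 hq1 hα n x
  have hbr : Real.sqrt (1 + q ^ (-(2 * α + 1)) * x ^ 2) * phiQ q α n (q * x)
        - q ^ (-((2 * α + 1) * theta n)) * phiQ q α n x
      = dAlpha q α n * Real.sqrt (omegaAlpha q α x)
          * ((1 + q ^ (-(2 * α + 1)) * x ^ 2) * hTilde q α n (q * x)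
            - q ^ (-((2 * α + 1) * theta n)) * hTilde q α n x) := by
    unfold phiQ
    linear_combination (dAlpha q α n * hTilde q α n (q * x)) * hsq
  have hBr : (1 + q ^ (-(2 * α + 1)) * x ^ 2) * hTilde q α n (q * x)
        - q ^ (-((2 * α + 1) * theta n)) * hTilde q α n x
      = q ^ n * ((1 - q) * qNumAlpha q α (n + 1)) * x * hTilde q α (n + 1) x
          / (q ^ (2 * α + 1) * (1 - q ^ (n + 1))) := by
    rw [eq_div_iff (mul_ne_zero (ne_of_gt hupos) (ne_of_gt h1qn))]
    linear_combination hkey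
  rw [hbr, hBr]
  unfold phiQ dAlpha
  have hd : q ^ ((((n + 1 : ℕ) : ℝ)) ^ 2 / 2)
      = q ^ (((n : ℕ) : ℝ) ^ 2 / 2) * (q ^ n * q ^ ((1 : ℝ) / 2)) := by
    rw [← Real.rpow_natCast q n, ← Real.rpow_add hq0, ← Real.rpow_add hq0]
    congr 1
    push_cast
    ring
  have hq32 : q ^ (2 * α + 3 / 2) = q ^ (2 * α + 1) * q ^ ((1 : ℝ) / 2) := by
    rw [← Real.rpow_add hq0]; congr 1; ring
  have hsqrtPA : Real.sqrt (qPochAlpha q α (n + 1))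
      = Real.sqrt (qPochAlpha q α n)
          * (Real.sqrt (1 - q) * Real.sqrt (qNumAlpha q α (n + 1))) := by
    rw [qPochAlpha_succ n, Real.sqrt_mul (le_of_lt hPApos),
      Real.sqrt_mul (le_of_lt h1q)]
  rw [hd, hq32, hsqrtPA, qPoch_q_succ q n]
  set a := Real.sqrt (qNumAlpha q α (n + 1)) with hadef
  set b := Real.sqrt (1 - q) with hbdef
  have hapos : 0 < a := Real.sqrt_pos.mpr hNpos
  have hbpos : 0 < b := Real.sqrt_pos.mpr h1q
  have hNa : qNumAlpha q α (n + 1) = a ^ 2 := by rw [hadef, Real.sq_sqrt (le_of_lt hNpos)]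
  have h1qb : (1 : ℝ) - q = b ^ 2 := by rw [hbdef, Real.sq_sqrt (le_of_lt h1q)]
  rw [hNa, h1qb]
  have hPq' : qPoch q q n ≠ 0 := ne_of_gt hPqpos
  have h1qn' : (1 : ℝ) - q ^ (n + 1) ≠ 0 := ne_of_gt h1qn
  have hu' : q ^ (2 * α + 1) ≠ 0 := ne_of_gt hupos
  field_simp
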